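/- Let G = ℤ/4 × ℤ/2 × ℤ/2, a group of order 16, let H = {0} × ℤ/2 × ℤ/2 ⊆ G, and let M be the augmentation ideal of the group ring (ℤ/16)[G], so that H¹(G, M) ≅ ℤ/16. Under this isomorphism: (a) the kernel of the restriction map H¹(G, M) → H¹(H, M) is contained in the subgroup 4·(ℤ/16) of order 4; (b) the intersection of the kernels of the restriction maps H¹(G, M) → H¹(C, M) over all cyclic subgroups C of H equals the subgroup 2·(ℤ/16) of order 8. In particular this intersection strictly contains the sum of the kernel in (a) and the kernel of restriction to the cyclic subgroup ℤ/4 × {0} × {0}. -/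

import Mathlib

open CategoryTheory Finsupp

/-- The augmentation map `k[G] → k` as a morphism of representations. -/
noncomputable def augmentationHom (k : Type) (G : Type) [CommRing k] [Group G] :
    Rep.leftRegular k G ⟶ Rep.trivial k G k :=
  Rep.ofHom
    { toLinearMap := Finsupp.linearCombination k (fun _ : G => (1 : k)) ∘ₗ
        (MonoidAlgebra.coeffLinearEquiv k).toLinearMap
      isIntertwining' := fun g => by
        ext x
        simp [Representation.ofMulAction_single] }

/-- The augmentation ideal of `k[G]`, as a `G`-representation. -/
noncomputable def augmentationIdeal (k : Type) (G : Type) [CommRing k] [Group G] : Rep k G :=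
  Limits.kernel (augmentationHom k G)

/-- The group `G = ℤ/4 × ℤ/2 × ℤ/2` (written multiplicatively). -/
abbrev G₁₆ : Type := Multiplicative (ZMod 4 × ZMod 2 × ZMod 2)

/-- The subgroup `H = {0} × ℤ/2 × ℤ/2` of `G`. -/
def Hsub : Subgroup G₁₆ :=
  (AddMonoidHom.toMultiplicative (AddMonoidHom.fst (ZMod 4) (ZMod 2 × ZMod 2))).ker

/-- The cyclic subgroup `ℤ/4 × {0} × {0}` of `G`. -/
def Dsub : Subgroup G₁₆ :=
  (AddMonoidHom.toMultiplicative (AddMonoidHom.inl (ZMod 4) (ZMod 2 × ZMod 2))).range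

/-- The augmentation ideal `M` of `(ℤ/16)[G]` as a representation of `G`. -/
noncomputable def M₁₆ : Rep (ZMod 16) G₁₆ := augmentationIdeal (ZMod 16) G₁₆

/-- A 1-cocycle restricts to a coboundary on a subset `S ⊆ G`. -/
noncomputable def IsCoboundaryOn (S : Set G₁₆) (f : groupCohomology.cocycles₁ M₁₆) : Prop :=
  ∃ m : M₁₆, ∀ g ∈ S, f g = M₁₆.ρ g m - m

/-- The kernel of the restriction map `H¹(G, M) → H¹(S, M)`, as a subset of `H¹(G, M)`:
classes represented by a cocycle whose restriction to `S` is a coboundary. -/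
noncomputable def resKer (S : Set G₁₆) : Set (groupCohomology.H1 M₁₆) :=
  {c | ∃ f : groupCohomology.cocycles₁ M₁₆,
    groupCohomology.H1π M₁₆ f = c ∧ IsCoboundaryOn S f}

/-- The intersection of the kernels of restriction to all cyclic subgroups of `H`. -/
noncomputable def interKerCyc : Set (groupCohomology.H1 M₁₆) :=
  {c | ∀ C : Subgroup G₁₆, C ≤ Hsub → IsCyclic C → c ∈ resKer (C : Set G₁₆)}

set_option synthInstance.maxHeartbeats 1000000
set_option maxHeartbeats 4000000

noncomputable section
open groupCohomology Limits

abbrev Areg : Rep (ZMod 16) G₁₆ := Rep.leftRegular (ZMod 16) G₁₆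
abbrev augH := augmentationHom (ZMod 16) G₁₆
noncomputable def ιM : M₁₆ ⟶ Areg := kernel.ι augH

-- sanity: types
example (m : M₁₆) : Areg := ιM.hom m
example (α : Areg) : ZMod 16 := augH.hom α
def ρA (g : G₁₆) : (G₁₆ →₀ ZMod 16) →ₗ[ZMod 16] (G₁₆ →₀ ZMod 16) :=
  Finsupp.lmapDomain (ZMod 16) (ZMod 16) (g * ·)

lemma aregρ (g : G₁₆) (v : Areg) : (Areg.ρ g v).coeff = ρA g v.coeff := rfl

example (g x : G₁₆) (α : G₁₆ →₀ ZMod 16) : (ρA g α) x = α (g⁻¹ * x) := by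
  have := Finsupp.mapDomain_apply (mul_right_injective g) α (g⁻¹ * x)
  simp only [mul_inv_cancel_left] at this
  exact this

def epsL : (G₁₆ →₀ ZMod 16) →ₗ[ZMod 16] ZMod 16 :=
  Finsupp.linearCombination (ZMod 16) (fun _ : G₁₆ => (1 : ZMod 16))

lemma eps_iota (m : M₁₆) : augH.hom (ιM.hom m) = 0 := by
  have h := kernel.condition augH
  have : (ιM ≫ augH).hom m = (0 : M₁₆ ⟶ Rep.trivial (ZMod 16) G₁₆ (ZMod 16)).hom m := by
    rw [show ιM ≫ augH = 0 from h]
  simpa using this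

lemma iota_comm (g : G₁₆) (m : M₁₆) :
    (ιM.hom (M₁₆.ρ g m)).coeff = ρA g (ιM.hom m).coeff := by
  rw [Rep.hom_comm_apply]; rfl

abbrev Fgt := forget₂ (Rep (ZMod 16) G₁₆) (ModuleCat (ZMod 16))

lemma fmap_iota : Fgt.map ιM = ModuleCat.ofHom ιM.hom.toLinearMap := rfl

lemma iota_eq_comp :
    Fgt.map ιM =
      kernelComparison augH Fgt ≫ kernel.ι (Fgt.map augH) := by
  rw [kernelComparison_comp_ι]; rfl

lemma exists_lift (α : Areg) (hα : augH.hom α = 0) : ∃ m : M₁₆, ιM.hom m = α := by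
  have h2 : (Fgt.map augH) α = 0 := hα
  let β : (kernel (Fgt.map augH) : ModuleCat (ZMod 16)) :=
    (ModuleCat.kernelIsoKer (Fgt.map augH)).inv ⟨α, h2⟩
  refine ⟨inv (kernelComparison augH Fgt) β, ?_⟩
  have : ιM.hom (inv (kernelComparison augH Fgt) β)
      = (inv (kernelComparison augH Fgt) ≫ kernelComparison augH Fgt ≫ kernel.ι (Fgt.map augH)) β := by
    rw [← iota_eq_comp]; rfl
  rw [this, IsIso.inv_hom_id_assoc]
  have h3 := ModuleCat.kernelIsoKer_inv_kernel_ι (Fgt.map augH)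
  have h4 : kernel.ι (Fgt.map augH) β = (LinearMap.ker (Fgt.map augH).hom).subtype ⟨α, h2⟩ := by
    exact ConcreteCategory.congr_hom h3 ⟨α, h2⟩
  rw [h4]; rfl

lemma iota_inj : Function.Injective (ιM.hom : M₁₆.V → Areg.V) := by
  exact (Rep.mono_iff_injective _).1 (inferInstanceAs (Mono (kernel.ι augH)))

lemma cocycle_mul (f : cocycles₁ M₁₆) (g h : G₁₆) :
    (f (g * h) : M₁₆) = M₁₆.ρ g (f h) + f g :=
  (mem_cocycles₁_iff (f : G₁₆ → M₁₆)).1 f.2 g h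

def cf (v : Areg.V) : G₁₆ →₀ ZMod 16 := v.coeff

def alphaOf (f : cocycles₁ M₁₆) : G₁₆ →₀ ZMod 16 :=
  Finsupp.equivFunOnFinite.symm fun x => -(cf (ιM.hom (f x))) x

lemma alphaOf_apply (f : cocycles₁ M₁₆) (x : G₁₆) :
    alphaOf f x = -(cf (ιM.hom (f x))) x := rfl

lemma ρA_apply (g : G₁₆) (α : G₁₆ →₀ ZMod 16) (x : G₁₆) :
    (ρA g α) x = α (g⁻¹ * x) := by
  have := Finsupp.mapDomain_apply (mul_right_injective g) α (g⁻¹ * x)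
  simp only [mul_inv_cancel_left] at this
  exact this

lemma d_alpha (f : cocycles₁ M₁₆) (g : G₁₆) :
    ρA g (alphaOf f) - alphaOf f = cf (ιM.hom (f g)) := by
  ext x
  have hc : (f (g * (g⁻¹ * x)) : M₁₆) = M₁₆.ρ g (f (g⁻¹ * x)) + f g := cocycle_mul f g _
  rw [mul_inv_cancel_left] at hc
  have h2 : cf (ιM.hom (f x)) = ρA g (cf (ιM.hom (f (g⁻¹ * x)))) + cf (ιM.hom (f g)) := by
    show (ιM.hom (f x)).coeff = _
    rw [hc, map_add, MonoidAlgebra.coeff_add, iota_comm]; rfl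
  have h3 := congrArg (fun v : G₁₆ →₀ ZMod 16 => v x) h2
  simp only [Finsupp.add_apply, ρA_apply] at h3
  rw [Finsupp.sub_apply, ρA_apply, alphaOf_apply, alphaOf_apply]
  simp only [cf] at h3 ⊢
  linear_combination h3

lemma cf_iota_add (a b : M₁₆) :
    cf (ιM.hom (a + b)) = cf (ιM.hom a) + cf (ιM.hom b) := congrArg cf (map_add ιM.hom a b)

lemma cf_iota_sub (a b : M₁₆) :
    cf (ιM.hom (a - b)) = cf (ιM.hom a) - cf (ιM.hom b) := congrArg cf (map_sub ιM.hom a b)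

lemma cf_iota_smul (r : ZMod 16) (a : M₁₆) :
    cf (ιM.hom (r • a)) = r • cf (ιM.hom a) := congrArg cf (map_smul ιM.hom r a)

lemma cf_iota_comm (g : G₁₆) (m : M₁₆) : cf (ιM.hom (M₁₆.ρ g m)) = ρA g (cf (ιM.hom m)) :=
  iota_comm g m

def alphaL : cocycles₁ M₁₆ →ₗ[ZMod 16] (G₁₆ →₀ ZMod 16) where
  toFun := alphaOf
  map_add' f f' := by
    ext x
    have h0 : ((f + f' : cocycles₁ M₁₆) x : M₁₆) = (f x : M₁₆) + f' x := rfl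
    simp only [Finsupp.add_apply, alphaOf_apply, h0, cf, map_add, MonoidAlgebra.coeff_add]
    ring
  map_smul' r f := by
    ext x
    have h0 : ((r • f : cocycles₁ M₁₆) x : M₁₆) = r • (f x : M₁₆) := rfl
    simp only [Finsupp.smul_apply, alphaOf_apply, h0, cf, map_smul, MonoidAlgebra.coeff_smul,
      RingHom.id_apply, smul_eq_mul]
    ring

def PsiL : cocycles₁ M₁₆ →ₗ[ZMod 16] ZMod 16 := epsL ∘ₗ alphaL

lemma PsiL_apply (f : cocycles₁ M₁₆) : PsiL f = epsL (alphaOf f) := rfl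

lemma psi_zero_coboundary (f : cocycles₁ M₁₆) (h : PsiL f = 0) :
    ⇑f ∈ coboundaries₁ M₁₆ := by
  obtain ⟨m, hm⟩ := exists_lift (MonoidAlgebra.ofCoeff (alphaOf f)) h
  have hm' : cf (ιM.hom m) = alphaOf f := congrArg MonoidAlgebra.coeff hm
  refine ⟨m, funext fun g => ?_⟩
  rw [d₀₁_hom_apply]
  apply iota_inj
  have : cf (ιM.hom ((M₁₆.ρ g) m - m)) = cf (ιM.hom (f g)) := by
    rw [cf_iota_sub, cf_iota_comm, hm', d_alpha]
  exact MonoidAlgebra.coeff_injective this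

lemma beta_invariant (f : cocycles₁ M₁₆) (m : M₁₆) (g : G₁₆)
    (hg : (f g : M₁₆) = M₁₆.ρ g m - m) (x : G₁₆) :
    (alphaOf f - cf (ιM.hom m)) (g * x) = (alphaOf f - cf (ιM.hom m)) x := by
  have hρ : ρA g (alphaOf f - cf (ιM.hom m)) = alphaOf f - cf (ιM.hom m) := by
    rw [map_sub]
    have h1 : ρA g (alphaOf f) = alphaOf f + cf (ιM.hom (f g)) := by
      rw [← d_alpha f g]; abel
    rw [h1, hg, cf_iota_sub, cf_iota_comm]
    abel
  have := congrArg (fun v : G₁₆ →₀ ZMod 16 => v (g * x)) hρ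
  simp only [ρA_apply, inv_mul_cancel_left] at this
  exact this.symm

lemma eps_beta (f : cocycles₁ M₁₆) (m : M₁₆) :
    epsL (alphaOf f - cf (ιM.hom m)) = PsiL f := by
  rw [map_sub, PsiL_apply]
  have : epsL (cf (ιM.hom m)) = 0 := eps_iota m
  rw [this, sub_zero]

lemma eps_eq_sum (β : G₁₆ →₀ ZMod 16) : epsL β = ∑ x : G₁₆, β x := by
  show Finsupp.linearCombination (ZMod 16) (fun _ : G₁₆ => (1 : ZMod 16)) β = _
  rw [Finsupp.linearCombination_apply]
  rw [Finsupp.sum_fintype]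
  · simp
  · intro x; simp

abbrev X₁₆ : Type := ZMod 4 × ZMod 2 × ZMod 2

lemma sum_multiplicative (β : G₁₆ →₀ ZMod 16) :
    ∑ x : G₁₆, β x = ∑ p : X₁₆, β (Multiplicative.ofAdd p) :=
  (Fintype.sum_equiv Multiplicative.ofAdd _ _ (fun _ => rfl)).symm

lemma mem_Hsub (p : X₁₆) (hp : p.1 = 0) : Multiplicative.ofAdd p ∈ Hsub := by
  simp only [Hsub, MonoidHom.mem_ker]
  show Multiplicative.ofAdd p.1 = Multiplicative.ofAdd 0
  rw [hp]

lemma mem_Dsub (a : ZMod 4) : Multiplicative.ofAdd ((a, 0, 0) : X₁₆) ∈ Dsub := by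
  exact ⟨Multiplicative.ofAdd a, rfl⟩

def ct (v : (Rep.trivial (ZMod 16) G₁₆ (ZMod 16)).V) : ZMod 16 := v

lemma ct_eq_sum (β : G₁₆ →₀ ZMod 16) : ct (epsL β) = ∑ x : G₁₆, β x := eps_eq_sum β

lemma count_H (β : G₁₆ →₀ ZMod 16)
    (hβ : ∀ c ∈ Hsub, ∀ x, β (c * x) = β x) :
    ∃ t : ZMod 16, ct (epsL β) = 4 * t := by
  refine ⟨∑ a : ZMod 4, β (Multiplicative.ofAdd ((a, 0, 0) : X₁₆)), ?_⟩
  rw [ct_eq_sum, sum_multiplicative]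
  have key : ∀ p : X₁₆, β (Multiplicative.ofAdd p)
      = β (Multiplicative.ofAdd ((p.1, 0, 0) : X₁₆)) := by
    intro p
    have h := hβ (Multiplicative.ofAdd ((0, p.2.1, p.2.2) : X₁₆)) (mem_Hsub _ rfl)
      (Multiplicative.ofAdd ((p.1, 0, 0) : X₁₆))
    have he : Multiplicative.ofAdd ((0, p.2.1, p.2.2) : X₁₆) *
        Multiplicative.ofAdd ((p.1, 0, 0) : X₁₆) = Multiplicative.ofAdd p := by
      show Multiplicative.ofAdd (((0, p.2.1, p.2.2) : X₁₆) + (p.1, 0, 0)) = _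
      congr 1
      simp [Prod.ext_iff]
    rw [he] at h
    exact h
  calc ∑ p : X₁₆, β (Multiplicative.ofAdd p)
      = ∑ p : X₁₆, β (Multiplicative.ofAdd ((p.1, 0, 0) : X₁₆)) :=
        Finset.sum_congr rfl (fun p _ => key p)
    _ = ∑ a : ZMod 4, ∑ _q : ZMod 2 × ZMod 2, β (Multiplicative.ofAdd ((a, 0, 0) : X₁₆)) := by
        rw [Fintype.sum_prod_type]
    _ = ∑ a : ZMod 4, (4 : ZMod 16) * β (Multiplicative.ofAdd ((a, 0, 0) : X₁₆)) := by
        refine Finset.sum_congr rfl (fun a _ => ?_)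
        rw [Finset.sum_const]
        norm_num [nsmul_eq_mul]
    _ = 4 * ∑ a : ZMod 4, β (Multiplicative.ofAdd ((a, 0, 0) : X₁₆)) := by
        rw [Finset.mul_sum]

lemma count_D (β : G₁₆ →₀ ZMod 16)
    (hβ : ∀ c ∈ Dsub, ∀ x, β (c * x) = β x) :
    ∃ t : ZMod 16, ct (epsL β) = 4 * t := by
  refine ⟨∑ q : ZMod 2 × ZMod 2, β (Multiplicative.ofAdd ((0, q) : X₁₆)), ?_⟩
  rw [ct_eq_sum, sum_multiplicative]
  have key : ∀ p : X₁₆, β (Multiplicative.ofAdd p)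
      = β (Multiplicative.ofAdd ((0, p.2) : X₁₆)) := by
    intro p
    have h := hβ (Multiplicative.ofAdd ((p.1, 0, 0) : X₁₆)) (mem_Dsub p.1)
      (Multiplicative.ofAdd ((0, p.2) : X₁₆))
    have he : Multiplicative.ofAdd ((p.1, 0, 0) : X₁₆) *
        Multiplicative.ofAdd ((0, p.2) : X₁₆) = Multiplicative.ofAdd p := by
      show Multiplicative.ofAdd (((p.1, 0, 0) : X₁₆) + (0, p.2)) = _
      congr 1
      simp [Prod.ext_iff]
    rw [he] at h
    exact h
  calc ∑ p : X₁₆, β (Multiplicative.ofAdd p)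
      = ∑ p : X₁₆, β (Multiplicative.ofAdd ((0, p.2) : X₁₆)) :=
        Finset.sum_congr rfl (fun p _ => key p)
    _ = ∑ _a : ZMod 4, ∑ q : ZMod 2 × ZMod 2, β (Multiplicative.ofAdd ((0, q) : X₁₆)) := by
        rw [Fintype.sum_prod_type]
    _ = 4 * ∑ q : ZMod 2 × ZMod 2, β (Multiplicative.ofAdd ((0, q) : X₁₆)) := by
        rw [Finset.sum_const]
        norm_num [nsmul_eq_mul]

def h₀ : G₁₆ := Multiplicative.ofAdd ((0, 1, 0) : X₁₆)

lemma count_C0 (β : G₁₆ →₀ ZMod 16)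
    (hβ : ∀ x, β (h₀ * x) = β x) :
    ∃ t : ZMod 16, ct (epsL β) = 2 * t := by
  refine ⟨∑ a : ZMod 4, ∑ c : ZMod 2, β (Multiplicative.ofAdd ((a, 0, c) : X₁₆)), ?_⟩
  rw [ct_eq_sum, sum_multiplicative]
  have key : ∀ a : ZMod 4, ∀ c : ZMod 2, β (Multiplicative.ofAdd ((a, 1, c) : X₁₆))
      = β (Multiplicative.ofAdd ((a, 0, c) : X₁₆)) := by
    intro a c
    have h := hβ (Multiplicative.ofAdd ((a, 0, c) : X₁₆))
    have he : h₀ * Multiplicative.ofAdd ((a, 0, c) : X₁₆)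
        = Multiplicative.ofAdd ((a, 1, c) : X₁₆) := by
      show Multiplicative.ofAdd (((0, 1, 0) : X₁₆) + (a, 0, c)) = _
      congr 1
      simp [Prod.ext_iff]
    rw [he] at h
    exact h
  calc ∑ p : X₁₆, β (Multiplicative.ofAdd p)
      = ∑ a : ZMod 4, ∑ q : ZMod 2 × ZMod 2, β (Multiplicative.ofAdd ((a, q) : X₁₆)) := by
        rw [Fintype.sum_prod_type]
    _ = ∑ a : ZMod 4, ∑ b : ZMod 2, ∑ c : ZMod 2, β (Multiplicative.ofAdd ((a, b, c) : X₁₆)) := by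
        refine Finset.sum_congr rfl (fun a _ => ?_)
        rw [Fintype.sum_prod_type]
    _ = ∑ a : ZMod 4, (∑ c : ZMod 2, β (Multiplicative.ofAdd ((a, 0, c) : X₁₆))
          + ∑ c : ZMod 2, β (Multiplicative.ofAdd ((a, 1, c) : X₁₆))) := by
        refine Finset.sum_congr rfl (fun a _ => ?_)
        rw [show (Finset.univ : Finset (ZMod 2)) = {0, 1} by decide]
        rw [Finset.sum_insert (by decide), Finset.sum_singleton]
    _ = 2 * ∑ a : ZMod 4, ∑ c : ZMod 2, β (Multiplicative.ofAdd ((a, 0, c) : X₁₆)) := by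
        rw [Finset.mul_sum]
        refine Finset.sum_congr rfl (fun a _ => ?_)
        have : ∑ c : ZMod 2, β (Multiplicative.ofAdd ((a, 1, c) : X₁₆))
            = ∑ c : ZMod 2, β (Multiplicative.ofAdd ((a, 0, c) : X₁₆)) :=
          Finset.sum_congr rfl (fun c _ => key a c)
        rw [this]; ring

lemma sq_one_of_mem_Hsub {h : G₁₆} (hh : h ∈ Hsub) : h * h = 1 := by
  have h1 : (h.toAdd).1 = 0 := by
    have : (AddMonoidHom.toMultiplicative (AddMonoidHom.fst (ZMod 4) (ZMod 2 × ZMod 2))) h = 1 := hh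
    exact congrArg Multiplicative.toAdd this
  show Multiplicative.ofAdd (h.toAdd + h.toAdd) = Multiplicative.ofAdd 0
  congr 1
  ext
  · show h.toAdd.1 + h.toAdd.1 = 0
    rw [h1]; ring
  · exact CharTwo.add_self_eq_zero _
  · exact CharTwo.add_self_eq_zero _

lemma eq_one_or_self_of_zpowers {h : G₁₆} (hsq : h * h = 1) {g : G₁₆}
    (hg : g ∈ Subgroup.zpowers h) : g = 1 ∨ g = h := by
  obtain ⟨n, rfl⟩ := hg
  have h2 : h ^ (2 : ℤ) = 1 := by rw [zpow_two, hsq]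
  rcases Int.even_or_odd n with ⟨k, hk⟩ | ⟨k, hk⟩
  · left
    show h ^ n = 1
    rw [hk, ← two_mul, zpow_mul, h2, one_zpow]
  · right
    show h ^ n = h
    rw [hk, zpow_add, zpow_mul, h2, one_zpow, one_mul, zpow_one]

lemma coe_smul_apply (r : ZMod 16) (f : cocycles₁ M₁₆) (g : G₁₆) :
    ((r • f : cocycles₁ M₁₆) g : M₁₆) = r • (f g : M₁₆) := rfl

lemma psiL_vanish_coboundary {S : Set G₁₆} {f : cocycles₁ M₁₆}
    (hf : IsCoboundaryOn S f) {n : ZMod 16}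
    (hcount : ∀ β : G₁₆ →₀ ZMod 16, (∀ c ∈ S, ∀ x, β (c * x) = β x) →
      ∃ t : ZMod 16, ct (epsL β) = n * t) :
    ∃ t : ZMod 16, PsiL f = n * t := by
  obtain ⟨m, hm⟩ := hf
  obtain ⟨t, ht⟩ := hcount (alphaOf f - cf (ιM.hom m)) (fun c hc x => beta_invariant f m c (hm c hc) x)
  refine ⟨t, ?_⟩
  have : ct (epsL (alphaOf f - cf (ιM.hom m))) = PsiL f := eps_beta f m
  rw [← this, ht]

open groupCohomology in
lemma smul_c_zero (c : groupCohomology.H1 M₁₆) (f : cocycles₁ M₁₆)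
    (hπ : groupCohomology.H1π M₁₆ f = c) (n : ZMod 16) (h : PsiL (n • f) = 0) :
    n • c = 0 := by
  rw [← hπ, ← map_smul]
  exact (H1π_eq_zero_iff _).2 (psi_zero_coboundary _ h)

lemma resKer_H_four {c : groupCohomology.H1 M₁₆} (hc : c ∈ resKer (Hsub : Set G₁₆)) :
    (4 : ZMod 16) • c = 0 := by
  obtain ⟨f, hπ, hco⟩ := hc
  obtain ⟨t, ht⟩ := psiL_vanish_coboundary hco (fun β hβ => count_H β (fun x hx => hβ x hx))
  apply smul_c_zero c f hπ
  rw [map_smul, ht, smul_eq_mul, ← mul_assoc]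
  rw [show (4 : ZMod 16) * 4 = 0 by decide, zero_mul]

lemma resKer_D_four {c : groupCohomology.H1 M₁₆} (hc : c ∈ resKer (Dsub : Set G₁₆)) :
    (4 : ZMod 16) • c = 0 := by
  obtain ⟨f, hπ, hco⟩ := hc
  obtain ⟨t, ht⟩ := psiL_vanish_coboundary hco (fun β hβ => count_D β (fun x hx => hβ x hx))
  apply smul_c_zero c f hπ
  rw [map_smul, ht, smul_eq_mul, ← mul_assoc]
  rw [show (4 : ZMod 16) * 4 = 0 by decide, zero_mul]

lemma h₀_mem_Hsub : h₀ ∈ Hsub := mem_Hsub _ rfl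

lemma zpowers_h₀_le : Subgroup.zpowers h₀ ≤ Hsub := by
  rw [Subgroup.zpowers_le]; exact h₀_mem_Hsub

lemma zpowers_h₀_cyclic : IsCyclic (Subgroup.zpowers h₀) := by
  refine ⟨⟨⟨h₀, Subgroup.mem_zpowers h₀⟩, fun x => ?_⟩⟩
  obtain ⟨n, hn⟩ := x.2
  exact ⟨n, Subtype.ext (by rw [SubgroupClass.coe_zpow]; exact hn)⟩

lemma interKer_eight {c : groupCohomology.H1 M₁₆} (hc : c ∈ interKerCyc) :
    (8 : ZMod 16) • c = 0 := by
  obtain ⟨f, hπ, hco⟩ := hc (Subgroup.zpowers h₀) zpowers_h₀_le zpowers_h₀_cyclic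
  obtain ⟨t, ht⟩ := psiL_vanish_coboundary hco
    (fun β hβ => count_C0 β (fun x => hβ h₀ (Subgroup.mem_zpowers h₀) x))
  apply smul_c_zero c f hπ
  rw [map_smul, ht, smul_eq_mul, ← mul_assoc]
  rw [show (8 : ZMod 16) * 2 = 0 by decide, zero_mul]

lemma two_smul_mem_inter (d : groupCohomology.H1 M₁₆) :
    (2 : ZMod 16) • d ∈ interKerCyc := by
  intro C hC hcyc
  obtain ⟨f, hf⟩ := (ModuleCat.epi_iff_surjective (H1π M₁₆)).1 inferInstance d
  refine ⟨(2 : ZMod 16) • f, by rw [map_smul]; exact congrArg _ hf, ?_⟩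
  obtain ⟨⟨h, hhC⟩, hgen⟩ := hcyc.exists_generator
  have hsq : h * h = 1 := sq_one_of_mem_Hsub (hC hhC)
  refine ⟨-(f h : M₁₆), fun g hg => ?_⟩
  have hz : g ∈ Subgroup.zpowers h := by
    obtain ⟨n, hn⟩ := hgen ⟨g, hg⟩
    refine ⟨n, ?_⟩
    have := congrArg Subtype.val hn
    rwa [SubgroupClass.coe_zpow] at this
  have h2s : ∀ v : M₁₆, (2 : ZMod 16) • v = v + v := by
    intro v
    rw [show (2 : ZMod 16) = ((2 : ℕ) : ZMod 16) by norm_num, Nat.cast_smul_eq_nsmul, two_nsmul]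
  rcases eq_one_or_self_of_zpowers hsq hz with rfl | rfl
  · rw [coe_smul_apply, cocycles₁_map_one, smul_zero]
    rw [show M₁₆.ρ (1 : G₁₆) = 1 from map_one M₁₆.ρ]
    simp
  · rw [coe_smul_apply]
    have hself : M₁₆.ρ g (f g : M₁₆) = -(f g : M₁₆) := by
      have hcm := cocycle_mul f g g
      rw [hsq, cocycles₁_map_one] at hcm
      exact eq_neg_of_add_eq_zero_left hcm.symm
    rw [map_neg, hself, h2s]
    abel

lemma zfact1 : ∀ x : ZMod 16, 4 * x = 0 → ∃ y, x = 4 * y := by decide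
lemma zfact2 : ∀ x : ZMod 16, 8 * x = 0 → ∃ y, x = 2 * y := by decide

lemma phi_smul (φ : groupCohomology.H1 M₁₆ ≃+ ZMod 16) (n : ℕ) (c : groupCohomology.H1 M₁₆) :
    φ (((n : ℕ) : ZMod 16) • c) = (n : ZMod 16) * φ c := by
  rw [Nat.cast_smul_eq_nsmul, map_nsmul, nsmul_eq_mul]

set_option synthInstance.maxHeartbeats 1000000 in
set_option maxHeartbeats 2000000 in
theorem h1_restriction_kernels' (φ : groupCohomology.H1 M₁₆ ≃+ ZMod 16) :
    (∀ c ∈ resKer (Hsub : Set G₁₆), ∃ y : ZMod 16, φ c = 4 * y) ∧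
    (φ '' interKerCyc = {x : ZMod 16 | ∃ y, x = 2 * y}) ∧
    ({x : groupCohomology.H1 M₁₆ | ∃ a ∈ resKer (Hsub : Set G₁₆),
        ∃ b ∈ resKer (Dsub : Set G₁₆), x = a + b} ⊂ interKerCyc) := by
  have e4 : ((4 : ℕ) : ZMod 16) = 4 := by norm_num
  have e8 : ((8 : ℕ) : ZMod 16) = 8 := by norm_num
  have e2 : ((2 : ℕ) : ZMod 16) = 2 := by norm_num
  have hφ4 : ∀ c : groupCohomology.H1 M₁₆, (4 : ZMod 16) • c = 0 → 4 * φ c = 0 := by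
    intro c h
    have := phi_smul φ 4 c
    rw [e4, h, map_zero] at this
    exact this.symm
  have hφ8 : ∀ c : groupCohomology.H1 M₁₆, (8 : ZMod 16) • c = 0 → 8 * φ c = 0 := by
    intro c h
    have := phi_smul φ 8 c
    rw [e8, h, map_zero] at this
    exact this.symm
  have hφ2 : ∀ y : ZMod 16, φ ((2 : ZMod 16) • φ.symm y) = 2 * y := by
    intro y
    have := phi_smul φ 2 (φ.symm y)
    rw [e2, AddEquiv.apply_symm_apply] at this
    exact this
  have hsum : ∀ x ∈ {x : groupCohomology.H1 M₁₆ | ∃ a ∈ resKer (Hsub : Set G₁₆),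
      ∃ b ∈ resKer (Dsub : Set G₁₆), x = a + b}, x ∈ interKerCyc := by
    rintro x ⟨a, ha, b, hb, rfl⟩
    have h4 : (4 : ZMod 16) • (a + b) = 0 := by
      rw [smul_add, resKer_H_four ha, resKer_D_four hb, add_zero]
    obtain ⟨y, hy⟩ := zfact1 _ (hφ4 _ h4)
    have : a + b = (2 : ZMod 16) • φ.symm (2 * y) := by
      apply φ.injective
      rw [hφ2, hy]; ring
    rw [this]
    exact two_smul_mem_inter _
  refine ⟨?_, ?_, ?_⟩
  · intro c hc
    exact zfact1 _ (hφ4 c (resKer_H_four hc))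
  · ext x
    simp only [Set.mem_image, Set.mem_setOf_eq]
    constructor
    · rintro ⟨c, hc, rfl⟩
      exact zfact2 _ (hφ8 c (interKer_eight hc))
    · rintro ⟨y, rfl⟩
      exact ⟨(2 : ZMod 16) • φ.symm y, two_smul_mem_inter _, hφ2 y⟩
  · refine (Set.ssubset_iff_of_subset hsum).2 ⟨(2 : ZMod 16) • φ.symm 1, two_smul_mem_inter _, ?_⟩
    intro hmem
    obtain ⟨a, ha, b, hb, heq⟩ := hmem
    have h4 : (4 : ZMod 16) • ((2 : ZMod 16) • φ.symm 1) = 0 := by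
      rw [heq, smul_add, resKer_H_four ha, resKer_D_four hb, add_zero]
    have := hφ4 _ h4
    rw [hφ2 1] at this
    revert this
    decide

/-- Let `G = ℤ/4 × ℤ/2 × ℤ/2`, `H = {0} × ℤ/2 × ℤ/2` and `M` the augmentation ideal of
`(ℤ/16)[G]`, so that `H¹(G,M) ≅ ℤ/16`.  Under any such isomorphism:
(a) the kernel of restriction `H¹(G,M) → H¹(H,M)` lands in `4·(ℤ/16)`;
(b) the intersection of the kernels of restriction to all cyclic subgroups of `H`
is exactly `2·(ℤ/16)`; in particular this intersection strictly contains the sum of the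
kernel in (a) and the kernel of restriction to `ℤ/4 × {0} × {0}`. -/
theorem h1_restriction_kernels (φ : groupCohomology.H1 M₁₆ ≃+ ZMod 16) :
    (∀ c ∈ resKer (Hsub : Set G₁₆), ∃ y : ZMod 16, φ c = 4 * y) ∧
    (φ '' interKerCyc = {x : ZMod 16 | ∃ y, x = 2 * y}) ∧
    ({x : groupCohomology.H1 M₁₆ | ∃ a ∈ resKer (Hsub : Set G₁₆),
        ∃ b ∈ resKer (Dsub : Set G₁₆), x = a + b} ⊂ interKerCyc) := by
  exact h1_restriction_kernels' φ
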